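/- For a connected finite graph and a vertex subset A with vol(A) ≤ vol(B) where B is the complement, the second eigenvalue of the normalized Laplacian satisfies λ₂(X) ≤ 2|∂A|/vol(A). -/

import Mathlib

open Finset
open scoped RealInnerProductSpace

/-- The classical normalized graph Laplacian `Δ = I - T^{-1/2} A T^{-1/2}`. -/
noncomputable def normLap {V : Type} [Fintype V] [DecidableEq V]
    (G : SimpleGraph V) [DecidableRel G.Adj] : Matrix V V ℝ :=
  Matrix.of fun v w => (if v = w then (1 : ℝ) else 0) -
    (G.adjMatrix ℝ) v w / Real.sqrt ((G.degree v : ℝ) * (G.degree w : ℝ))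

/-- The volume of a set of vertices: the sum of the degrees. -/
def vol {V : Type} [Fintype V] [DecidableEq V]
    (G : SimpleGraph V) [DecidableRel G.Adj] (A : Finset V) : ℝ :=
  ∑ v ∈ A, (G.degree v : ℝ)

/-- The number of directed edges from `A` to its complement. -/
def boundaryCard {V : Type} [Fintype V] [DecidableEq V]
    (G : SimpleGraph V) [DecidableRel G.Adj] (A : Finset V) : ℕ :=
  (Finset.univ.filter (fun p : V × V => p.1 ∈ A ∧ p.2 ∉ A ∧ G.Adj p.1 p.2)).card

section aux
set_option linter.unusedSectionVars false
variable {V : Type} [Fintype V] [DecidableEq V] (G : SimpleGraph V) [DecidableRel G.Adj]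

lemma adjRowSum (v : V) : ∑ w, (G.adjMatrix ℝ) v w = (G.degree v : ℝ) := by
  simp [SimpleGraph.adjMatrix_apply, Finset.sum_ite_eq, SimpleGraph.degree,
    SimpleGraph.neighborFinset, Finset.sum_boole]

lemma normLap_mulVec (f : V → ℝ) (v : V) :
    (normLap G).mulVec f v = f v - ∑ w, (G.adjMatrix ℝ) v w * f w /
      (Real.sqrt (G.degree v) * Real.sqrt (G.degree w)) := by
  have : ∀ w, Real.sqrt ((G.degree v : ℝ) * (G.degree w : ℝ))
      = Real.sqrt (G.degree v) * Real.sqrt (G.degree w) := fun w =>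
    Real.sqrt_mul (by positivity) _
  simp [normLap, Matrix.mulVec, dotProduct, sub_mul, Finset.sum_sub_distrib,
    Finset.sum_ite_eq, this, div_mul_eq_mul_div]

lemma normLap_hermitian : (normLap G).IsHermitian := by
  ext v w
  simp only [normLap, Matrix.conjTranspose_apply, Matrix.of_apply, star_trivial,
    SimpleGraph.adjMatrix_apply]
  rw [mul_comm ((G.degree w : ℝ))]
  congr 1
  · simp [eq_comm]
  · congr 1
    simp [G.adj_comm w v]

lemma normLap_kernel (hdeg : ∀ v, 0 < G.degree v) :
    (normLap G).mulVec (fun v => Real.sqrt (G.degree v)) = 0 := by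
  funext v
  rw [Pi.zero_apply, normLap_mulVec, sub_eq_zero]
  have hv0 := hdeg v
  have hv : Real.sqrt (G.degree v) ≠ 0 := by positivity
  have : ∀ w, (G.adjMatrix ℝ) v w * Real.sqrt (G.degree w) /
      (Real.sqrt (G.degree v) * Real.sqrt (G.degree w)) =
      (G.adjMatrix ℝ) v w / Real.sqrt (G.degree v) := by
    intro w
    have hw : Real.sqrt (G.degree w) ≠ 0 := by
      have := hdeg w; positivity
    field_simp
  rw [Finset.sum_congr rfl fun w _ => this w, ← Finset.sum_div, adjRowSum,
    eq_div_iff hv]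
  exact Real.mul_self_sqrt (by positivity)

lemma normLap_quadform (hdeg : ∀ v, 0 < G.degree v) (g : V → ℝ) :
    ∑ v, (normLap G).mulVec (fun w => Real.sqrt (G.degree w) * g w) v *
      (Real.sqrt (G.degree v) * g v) =
    ∑ v, (G.degree v : ℝ) * g v ^ 2 - ∑ v, ∑ w, (G.adjMatrix ℝ) v w * (g v * g w) := by
  rw [← Finset.sum_sub_distrib]
  refine Finset.sum_congr rfl fun v _ => ?_
  rw [normLap_mulVec]
  have hv : Real.sqrt (G.degree v) ≠ 0 := by have := hdeg v; positivity
  have h1 : ∀ w, (G.adjMatrix ℝ) v w * (Real.sqrt (G.degree w) * g w) /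
      (Real.sqrt (G.degree v) * Real.sqrt (G.degree w)) =
      (G.adjMatrix ℝ) v w * g w / Real.sqrt (G.degree v) := by
    intro w
    have hw : Real.sqrt (G.degree w) ≠ 0 := by have := hdeg w; positivity
    field_simp
  rw [Finset.sum_congr rfl fun w _ => h1 w, ← Finset.sum_div, sub_mul]
  have h2 : Real.sqrt (G.degree v) * g v * (Real.sqrt (G.degree v) * g v)
      = (G.degree v : ℝ) * g v ^ 2 := by
    have := Real.mul_self_sqrt (by positivity : (0:ℝ) ≤ (G.degree v : ℝ))
    nlinarith [this]
  have h3 : (∑ w, (G.adjMatrix ℝ) v w * g w) / Real.sqrt (G.degree v) *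
      (Real.sqrt (G.degree v) * g v) = ∑ w, (G.adjMatrix ℝ) v w * (g v * g w) := by
    rw [div_mul_eq_mul_div, mul_comm (Real.sqrt (G.degree v)) (g v), ← mul_assoc,
      mul_div_assoc, div_self hv, mul_one, Finset.sum_mul]
    exact Finset.sum_congr rfl fun w _ => by ring
  rw [h2, h3]

lemma boundaryCard_eq (A : Finset V) :
    (boundaryCard G A : ℝ) = vol G A - ∑ v, ∑ w, (G.adjMatrix ℝ) v w *
      ((if v ∈ A then (1:ℝ) else 0) * (if w ∈ A then (1:ℝ) else 0)) := by
  have h1 : ∑ v, ∑ w, (G.adjMatrix ℝ) v w *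
      ((if v ∈ A then (1:ℝ) else 0) * (if w ∈ A then (1:ℝ) else 0))
      = ∑ v ∈ A, ∑ w ∈ A, (G.adjMatrix ℝ) v w := by
    have inner : ∀ v, (∑ w, (G.adjMatrix ℝ) v w *
        ((if v ∈ A then (1:ℝ) else 0) * (if w ∈ A then (1:ℝ) else 0)))
        = if v ∈ A then ∑ w ∈ A, (G.adjMatrix ℝ) v w else 0 := by
      intro v
      by_cases hv : v ∈ A <;>
        simp [hv, mul_ite, mul_one, mul_zero, Finset.sum_ite_mem]
    rw [Finset.sum_congr rfl fun v _ => inner v]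
    simp [Finset.sum_ite_mem]
  have h2 : vol G A = ∑ v ∈ A, ∑ w, (G.adjMatrix ℝ) v w :=
    Finset.sum_congr rfl fun v _ => (adjRowSum G v).symm
  have h3 : (boundaryCard G A : ℝ) = ∑ v ∈ A, ∑ w ∈ Aᶜ, (G.adjMatrix ℝ) v w := by
    rw [boundaryCard, Finset.card_filter, ← Finset.univ_product_univ, Finset.sum_product]
    push_cast
    rw [← Finset.sum_subset A.subset_univ
      (fun v _ hv => Finset.sum_eq_zero fun w _ => by simp [hv])]
    refine Finset.sum_congr rfl fun v hv => ?_
    rw [show Aᶜ = univ.filter (· ∉ A) from by ext; simp, Finset.sum_filter]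
    refine Finset.sum_congr rfl fun w _ => ?_
    by_cases hw : w ∈ A <;> simp [hv, hw, SimpleGraph.adjMatrix_apply]
  rw [h1, h2, h3]
  rw [← Finset.sum_sub_distrib]
  refine Finset.sum_congr rfl fun v _ => ?_
  rw [eq_sub_iff_add_eq, ← Finset.sum_add_sum_compl A (fun w => (G.adjMatrix ℝ) v w), add_comm]

end aux

/-- For a connected finite graph and a vertex subset `A` with
`vol(A) ≤ vol(B)` (`B` the complement), the second smallest eigenvalue of the
normalized Laplacian satisfies `λ₂(X) ≤ 2 |∂A| / vol(A)`. -/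
theorem normLap_cheeger_upper' {V : Type} [Fintype V] [DecidableEq V]
    (G : SimpleGraph V) [DecidableRel G.Adj]
    (hconn : G.Connected) (hdeg : ∀ v, 0 < G.degree v)
    (A : Finset V) (hA : A.Nonempty) (hvol : vol G A ≤ vol G Aᶜ) :
    sInf {μ : ℝ | ∃ f : V → ℝ, f ≠ 0 ∧ (normLap G).mulVec f = μ • f ∧
        ∑ v, f v * Real.sqrt (G.degree v) = 0} ≤
      2 * (boundaryCard G A : ℝ) / vol G A := by
  classical
  set S := {μ : ℝ | ∃ f : V → ℝ, f ≠ 0 ∧ (normLap G).mulVec f = μ • f ∧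
      ∑ v, f v * Real.sqrt (G.degree v) = 0} with hS
  -- volumes
  have hdvpos : ∀ v : V, (0:ℝ) < (G.degree v : ℝ) := fun v => by exact_mod_cast hdeg v
  have hVa : 0 < vol G A := Finset.sum_pos (fun v _ => hdvpos v) hA
  have hBne : Aᶜ.Nonempty := by
    by_contra h
    rw [Finset.not_nonempty_iff_eq_empty] at h
    have : vol G Aᶜ = 0 := by simp [vol, h]
    linarith
  have hVb : 0 < vol G Aᶜ := Finset.sum_pos (fun v _ => hdvpos v) hBne
  set Va := vol G A with hVadef
  set Vb := vol G Aᶜ with hVbdef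
  set VT := Va + Vb with hVT
  have hVTpos : 0 < VT := by linarith
  set a : ℝ := Va / VT with ha
  set g : V → ℝ := fun v => (if v ∈ A then (1:ℝ) else 0) - a with hg
  set F : EuclideanSpace ℝ V := WithLp.toLp 2 (fun v => Real.sqrt (G.degree v) * g v) with hF
  set M := normLap G with hM
  -- basic sums
  have hVTsum : ∑ v : V, (G.degree v : ℝ) = VT := by
    rw [hVT, hVadef, hVbdef, vol, vol, Finset.sum_add_sum_compl]
  have hχd : ∑ v, (G.degree v : ℝ) * (if v ∈ A then (1:ℝ) else 0) = Va := by
    simp only [mul_ite, mul_one, mul_zero, Finset.sum_ite_mem, Finset.univ_inter]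
    rfl
  -- inner product formula
  have hinner : ∀ x y : EuclideanSpace ℝ V, ⟪x, y⟫ = ∑ v, x v * y v := by
    intro x y
    simp [PiLp.inner_apply, RCLike.inner_apply, conj_trivial, mul_comm]
  -- the operator
  set d : EuclideanSpace ℝ V := WithLp.toLp 2 (fun v => Real.sqrt (G.degree v)) with hd
  set L : EuclideanSpace ℝ V →ₗ[ℝ] EuclideanSpace ℝ V := Matrix.toEuclideanLin M with hL
  have hLsymm : L.IsSymmetric := Matrix.isHermitian_iff_isSymmetric.mp (normLap_hermitian G)
  have hLapp : ∀ (x : EuclideanSpace ℝ V) (v : V), L x v = M.mulVec x v := fun x v => rfl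
  have hLd : L d = 0 := by
    ext v
    show M.mulVec (fun v => Real.sqrt (G.degree v)) v = 0
    rw [hM, normLap_kernel G hdeg]
    rfl
  set W := (ℝ ∙ d)ᗮ with hW
  have hinv : ∀ x ∈ W, L x ∈ W := by
    intro x hx
    rw [hW, Submodule.mem_orthogonal_singleton_iff_inner_right]
    rw [← hLsymm d x, hLd, inner_zero_left]
  set T : W →ₗ[ℝ] W := L.restrict hinv with hT
  have hTsymm : T.IsSymmetric := hLsymm.restrict_invariant hinv
  -- test vector
  have hgsum : ∑ v, (G.degree v : ℝ) * g v = 0 := by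
    simp only [hg, mul_sub, Finset.sum_sub_distrib, hχd]
    rw [← Finset.sum_mul, hVTsum, ha]
    field_simp
    simp
  have hFW : F ∈ W := by
    rw [hW, Submodule.mem_orthogonal_singleton_iff_inner_right, hinner]
    rw [← hgsum]
    refine Finset.sum_congr rfl fun v _ => ?_
    show Real.sqrt (G.degree v) * (Real.sqrt (G.degree v) * g v) = _
    rw [← mul_assoc, Real.mul_self_sqrt (by positivity)]
  have ha1 : a < 1 := by
    rw [ha, div_lt_one hVTpos]
    linarith
  have hFne : F ≠ 0 := by
    intro h
    obtain ⟨v₀, hv₀⟩ := hA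
    have h0 := congrArg (fun x : EuclideanSpace ℝ V => x v₀) h
    have : Real.sqrt (G.degree v₀) * g v₀ = 0 := h0
    have hgv : g v₀ = 1 - a := by simp [hg, hv₀]
    have hsq : (0:ℝ) < Real.sqrt (G.degree v₀) := Real.sqrt_pos.mpr (hdvpos v₀)
    rw [hgv] at this
    nlinarith
  have hFWne : (⟨F, hFW⟩ : W) ≠ 0 := fun h => hFne (by simpa using congrArg Subtype.val h)
  haveI : Nontrivial W := nontrivial_of_ne _ _ hFWne
  -- the eigenvalue
  set μ : ℝ := ⨅ x : { x : W // x ≠ 0 },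
      RCLike.re ⟪T x, (x : W)⟫ / ‖(x : W)‖ ^ 2 with hμ
  have hEig : Module.End.HasEigenvalue T μ := by
    have := hTsymm.hasEigenvalue_iInf_of_finiteDimensional
    exact this
  -- μ is in S
  obtain ⟨x, hx⟩ := hEig.exists_hasEigenvector
  have hxapp : L ↑x = μ • (↑x : EuclideanSpace ℝ V) := by
    have h1 : (↑(T x) : EuclideanSpace ℝ V) = L ↑x := LinearMap.restrict_coe_apply _ _ _
    have h2 : T x = μ • x := hx.apply_eq_smul
    rw [← h1, h2]
    rfl
  have hμS : μ ∈ S := by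
    refine ⟨(↑x : EuclideanSpace ℝ V), ?_, ?_, ?_⟩
    · intro h
      exact hx.right (Submodule.coe_eq_zero.mp (by ext v; exact congrFun h v))
    · funext v
      have := congrArg (fun y : EuclideanSpace ℝ V => y v) hxapp
      exact this
    · have hxW : ⟪d, (↑x : EuclideanSpace ℝ V)⟫ = (0:ℝ) :=
        Submodule.mem_orthogonal_singleton_iff_inner_right.mp x.2
      rw [hinner] at hxW
      rw [← hxW]
      exact Finset.sum_congr rfl fun v _ => mul_comm _ _
  -- operator norm bound
  set Lc : EuclideanSpace ℝ V →L[ℝ] EuclideanSpace ℝ V := LinearMap.toContinuousLinearMap L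
    with hLc
  set C : ℝ := ‖Lc‖ with hC
  have hLcC : ∀ y : EuclideanSpace ℝ V, ‖L y‖ ≤ C * ‖y‖ := by
    intro y
    have := Lc.le_opNorm y
    rwa [show Lc y = L y from congrFun (LinearMap.coe_toContinuousLinearMap' L) y] at this
  -- BddBelow for the eigenvalue set S
  have hSbdd : BddBelow S := by
    refine ⟨-C, fun μ' hμ' => ?_⟩
    obtain ⟨f, hf0, heig, -⟩ := hμ'
    have hfe : (WithLp.toLp 2 f : EuclideanSpace ℝ V) ≠ 0 := fun h => hf0 (by simpa using congrArg WithLp.ofLp h)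
    have hfpos : 0 < ‖(WithLp.toLp 2 f : EuclideanSpace ℝ V)‖ := norm_pos_iff.mpr hfe
    have hLy : L (WithLp.toLp 2 f : EuclideanSpace ℝ V) =
        μ' • (WithLp.toLp 2 f : EuclideanSpace ℝ V) := by
      ext v
      show M.mulVec f v = μ' * f v
      rw [heig]; rfl
    have h2 : ‖L (WithLp.toLp 2 f : EuclideanSpace ℝ V)‖ =
        |μ'| * ‖(WithLp.toLp 2 f : EuclideanSpace ℝ V)‖ := by
      rw [hLy, norm_smul, Real.norm_eq_abs]
    have h3 := hLcC (WithLp.toLp 2 f : EuclideanSpace ℝ V)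
    rw [h2] at h3
    have habs : |μ'| ≤ C := le_of_mul_le_mul_right (by linarith) hfpos
    have := neg_abs_le μ'
    linarith
  -- BddBelow for the Rayleigh quotients
  have hRay : ∀ x : { x : W // x ≠ 0 },
      RCLike.re ⟪T ↑x, (↑x : W)⟫ / ‖(↑x : W)‖ ^ 2 =
      ⟪L ((x : W) : EuclideanSpace ℝ V), ((x : W) : EuclideanSpace ℝ V)⟫ /
        ‖((x : W) : EuclideanSpace ℝ V)‖ ^ 2 := by
    intro x
    show ⟪T ↑x, (↑x : W)⟫ / ‖(↑x : W)‖ ^ 2 = _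
    rw [Submodule.coe_inner, LinearMap.restrict_coe_apply, Submodule.norm_coe]
  have hRbdd : BddBelow (Set.range fun x : { x : W // x ≠ 0 } =>
      RCLike.re ⟪T ↑x, (↑x : W)⟫ / ‖(↑x : W)‖ ^ 2) := by
    refine ⟨-C, ?_⟩
    rintro r ⟨x, rfl⟩
    show -C ≤ RCLike.re ⟪T ↑x, (↑x : W)⟫ / ‖(↑x : W)‖ ^ 2
    rw [hRay x]
    set y : EuclideanSpace ℝ V := ((x : W) : EuclideanSpace ℝ V) with hy
    have hyne : y ≠ 0 := fun h => x.2 (Submodule.coe_eq_zero.mp h)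
    have hypos : 0 < ‖y‖ := norm_pos_iff.mpr hyne
    have h1 : |⟪L y, y⟫| ≤ ‖L y‖ * ‖y‖ := abs_real_inner_le_norm _ _
    have h2 : ‖L y‖ * ‖y‖ ≤ C * ‖y‖ ^ 2 := by
      calc ‖L y‖ * ‖y‖ ≤ C * ‖y‖ * ‖y‖ :=
            mul_le_mul_of_nonneg_right (hLcC y) (norm_nonneg y)
        _ = C * ‖y‖ ^ 2 := by ring
    have h3 : -(C * ‖y‖ ^ 2) ≤ ⟪L y, y⟫ := by
      have := neg_abs_le (⟪L y, y⟫ : ℝ)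
      linarith
    rw [le_div_iff₀ (by positivity : (0:ℝ) < ‖y‖ ^ 2)]
    linarith
  -- μ is at most the Rayleigh quotient of F
  have hμle : μ ≤ ⟪L F, F⟫ / ‖F‖ ^ 2 := by
    have := ciInf_le hRbdd (⟨⟨F, hFW⟩, hFWne⟩ : { x : W // x ≠ 0 })
    rw [hμ]
    calc (⨅ x : { x : W // x ≠ 0 }, RCLike.re ⟪T ↑x, (↑x : W)⟫ / ‖(↑x : W)‖ ^ 2)
        ≤ RCLike.re ⟪T (⟨F, hFW⟩ : W), ((⟨F, hFW⟩ : W) : W)⟫ / ‖((⟨F, hFW⟩ : W) : W)‖ ^ 2 :=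
          this
      _ = ⟪L F, F⟫ / ‖F‖ ^ 2 := hRay ⟨⟨F, hFW⟩, hFWne⟩
  -- sums
  set EAA : ℝ := ∑ v, ∑ w, (G.adjMatrix ℝ) v w *
      ((if v ∈ A then (1:ℝ) else 0) * (if w ∈ A then (1:ℝ) else 0)) with hEAA
  have hAsym : ∀ v w : V, (G.adjMatrix ℝ) v w = (G.adjMatrix ℝ) w v := by
    intro v w; simp [SimpleGraph.adjMatrix_apply, G.adj_comm]
  have hT1 : ∑ v, ∑ w, (G.adjMatrix ℝ) v w * (if v ∈ A then (1:ℝ) else 0) = Va := by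
    rw [← hχd]
    refine Finset.sum_congr rfl fun v _ => ?_
    rw [← Finset.sum_mul, adjRowSum]
  have hT2 : ∑ v, ∑ w, (G.adjMatrix ℝ) v w * (if w ∈ A then (1:ℝ) else 0) = Va := by
    rw [Finset.sum_comm, ← hT1]
    exact Finset.sum_congr rfl fun w _ => Finset.sum_congr rfl fun v _ => by rw [hAsym]
  have hT3 : ∑ v, ∑ w : V, (G.adjMatrix ℝ) v w = VT := by
    rw [← hVTsum]; exact Finset.sum_congr rfl fun v _ => adjRowSum G v
  have hS1 : ∑ v, (G.degree v : ℝ) * g v ^ 2 = Va - 2*a*Va + a^2*VT := by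
    have expand : ∀ v, (G.degree v : ℝ) * g v ^ 2 =
        (G.degree v : ℝ) * (if v ∈ A then (1:ℝ) else 0) -
        2*a*((G.degree v : ℝ) * (if v ∈ A then (1:ℝ) else 0)) + a^2*(G.degree v : ℝ) := by
      intro v
      show (G.degree v : ℝ) * ((if v ∈ A then (1:ℝ) else 0) - a) ^ 2 = _
      by_cases h : v ∈ A <;> simp [h] <;> ring
    rw [Finset.sum_congr rfl fun v _ => expand v]
    simp only [Finset.sum_add_distrib, Finset.sum_sub_distrib, ← Finset.mul_sum]
    rw [hχd, hVTsum]
  have hS2 : ∑ v, ∑ w, (G.adjMatrix ℝ) v w * (g v * g w) = EAA - 2*a*Va + a^2*VT := by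
    have expand : ∀ v w, (G.adjMatrix ℝ) v w * (g v * g w) =
        (G.adjMatrix ℝ) v w * ((if v ∈ A then (1:ℝ) else 0) * (if w ∈ A then (1:ℝ) else 0))
        - a*((G.adjMatrix ℝ) v w * (if v ∈ A then (1:ℝ) else 0))
        - a*((G.adjMatrix ℝ) v w * (if w ∈ A then (1:ℝ) else 0))
        + a^2*((G.adjMatrix ℝ) v w) := by
      intro v w
      show (G.adjMatrix ℝ) v w * (((if v ∈ A then (1:ℝ) else 0) - a) *
        ((if w ∈ A then (1:ℝ) else 0) - a)) = _
      ring
    rw [Finset.sum_congr rfl fun v _ => Finset.sum_congr rfl fun w _ => expand v w]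
    simp only [Finset.sum_add_distrib, Finset.sum_sub_distrib, ← Finset.mul_sum]
    rw [hT1, hT2, hT3, ← hEAA]
    ring
  -- numerator
  have hnum : ⟪L F, F⟫ = (boundaryCard G A : ℝ) := by
    rw [hinner]
    have h0 : ∑ v, L F v * F v = ∑ v, (normLap G).mulVec
        (fun w => Real.sqrt (G.degree w) * g w) v * (Real.sqrt (G.degree v) * g v) := rfl
    rw [h0, normLap_quadform G hdeg g, hS1, hS2, boundaryCard_eq G A, ← hEAA, ← hVadef]
    ring
  -- denominator
  have hden : ‖F‖ ^ 2 = Va * Vb / VT := by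
    have h1 : ‖F‖ ^ 2 = ⟪F, F⟫ := (real_inner_self_eq_norm_sq F).symm
    rw [h1, hinner]
    have h2 : ∀ v, F v * F v = (G.degree v : ℝ) * g v ^ 2 := by
      intro v
      show (Real.sqrt (G.degree v) * g v) * (Real.sqrt (G.degree v) * g v) = _
      have h3 : Real.sqrt (G.degree v) * Real.sqrt (G.degree v) = (G.degree v : ℝ) :=
        Real.mul_self_sqrt (by positivity)
      calc (Real.sqrt (G.degree v) * g v) * (Real.sqrt (G.degree v) * g v)
          = (Real.sqrt (G.degree v) * Real.sqrt (G.degree v)) * (g v * g v) := by ring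
        _ = (G.degree v : ℝ) * g v ^ 2 := by rw [h3]; ring
    rw [Finset.sum_congr rfl fun v _ => h2 v, hS1, ha, hVT]
    have hne : Va + Vb ≠ 0 := by positivity
    field_simp
    ring
  have hbd0 : (0:ℝ) ≤ (boundaryCard G A : ℝ) := Nat.cast_nonneg _
  have hμ2 : μ ≤ (boundaryCard G A : ℝ) / (Va * Vb / VT) := by
    rw [← hnum, ← hden]; exact hμle
  have hkey : Va / 2 ≤ Va * Vb / VT := by
    rw [div_le_div_iff₀ two_pos hVTpos, hVT]
    have h := mul_le_mul_of_nonneg_left hvol hVa.le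
    calc Va * (Va + Vb) = Va * Va + Va * Vb := by ring
      _ ≤ Va * Vb + Va * Vb := by linarith
      _ = Va * Vb * 2 := by ring
  have hfinal : (boundaryCard G A : ℝ) / (Va * Vb / VT) ≤ 2 * (boundaryCard G A : ℝ) / Va := by
    have h2 : 2 * (boundaryCard G A : ℝ) / Va = (boundaryCard G A : ℝ) / (Va / 2) := by
      rw [div_div_eq_mul_div]; ring
    rw [h2]
    exact div_le_div_of_nonneg_left hbd0 (by positivity) hkey
  calc sInf S ≤ μ := csInf_le hSbdd hμS
    _ ≤ (boundaryCard G A : ℝ) / (Va * Vb / VT) := hμ2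
    _ ≤ 2 * (boundaryCard G A : ℝ) / Va := hfinal
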